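/- Let n ≥ 1, let t be a real number with t ≠ 0 and t ≠ 1/2, let τ be a real number with τ ≠ 0, let cR be a curvature-type tensor, and let cT be a torsion-type tensor that is antisymmetric in its first two arguments (cT i k r = − cT k i r). Define tR i j k l := t · cR i j k l + ((1−t)/2) · (cR k j i l + cR i l k j) + ((1−t)/2)² · (∑_r cT i k r · conj (cT j l r) − ∑_r cT i r l · conj (cT j r k)) and tT i j k := t · cT i j k. For a curvature-type tensor S define the four Ricci traces Ric¹ S k l := ∑_i S k l i i, Ric² S k l := ∑_i S i i k l, Ric³ S k l := ∑_i S k i i l, Ric⁴ S k l := ∑_i S i l k i. Then for all indices k, l: Ric² cR k l + ((1 − 1/τ)/4) · ∑_{p,q} cT p q l · conj (cT p q k) = ((t²+2t−1)/(2t(2t−1))) · Ric² tR k l + ((t−1)²/(2t(2t−1))) · Ric¹ tR k l + ((t−1)/(2(2t−1))) · (Ric³ tR k l + Ric⁴ tR k l) + ((t−1)²(t²−4t+1)/(8t³(2t−1))) · ∑_{i,r} tT i k r · conj (tT i l r) + ((t−1)³/(8t²(2t−1))) · (∑_{i,r} tT k r l · conj (tT i r i) + ∑_{i,r} tT i r i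 · conj (tT l r k)) + (((t−1)²(t²+2t−1))/(8t³(2t−1)) + (1 − 1/τ)/(4t²)) · ∑_{i,r} tT i r l · conj (tT i r k). -/

import Mathlib

set_option maxHeartbeats 1000000 in
/-- First identity of Proposition 5.3: the tempered Ricci curvature `ᶜRic^τ` of the Chern
connection expressed through the Ricci traces and torsion of the Gauduchon connection. -/
theorem tempered_ricci_from_gauduchon (n : ℕ) (hn : 1 ≤ n) (t : ℝ)
    (ht0 : t ≠ 0) (ht2 : t ≠ 1/2) (τ : ℝ) (hτ : τ ≠ 0)
    (cR : Fin n → Fin n → Fin n → Fin n → ℂ)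
    (cT : Fin n → Fin n → Fin n → ℂ)
    (hcT : ∀ i k r : Fin n, cT i k r = - cT k i r)
    (tR : Fin n → Fin n → Fin n → Fin n → ℂ)
    (tT : Fin n → Fin n → Fin n → ℂ)
    (htR : ∀ i j k l : Fin n,
      tR i j k l = (t : ℂ) * cR i j k l
        + (((1 - t)/2 : ℝ) : ℂ) * (cR k j i l + cR i l k j)
        + ((((1 - t)/2)^2 : ℝ) : ℂ)
            * ((∑ r : Fin n, cT i k r * (starRingEnd ℂ) (cT j l r))
              - (∑ r : Fin n, cT i r l * (starRingEnd ℂ) (cT j r k))))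
    (htT : ∀ i j k : Fin n, tT i j k = (t : ℂ) * cT i j k)
    (Ric₁ Ric₂ Ric₃ Ric₄ : (Fin n → Fin n → Fin n → Fin n → ℂ) → Fin n → Fin n → ℂ)
    (hRic₁ : ∀ S k l, Ric₁ S k l = ∑ i : Fin n, S k l i i)
    (hRic₂ : ∀ S k l, Ric₂ S k l = ∑ i : Fin n, S i i k l)
    (hRic₃ : ∀ S k l, Ric₃ S k l = ∑ i : Fin n, S k i i l)
    (hRic₄ : ∀ S k l, Ric₄ S k l = ∑ i : Fin n, S i l k i) :
    ∀ k l : Fin n,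
      Ric₂ cR k l + (((1 - 1/τ)/4 : ℝ) : ℂ)
          * ∑ p : Fin n, ∑ q : Fin n, cT p q l * (starRingEnd ℂ) (cT p q k)
        = (((t^2 + 2*t - 1)/(2*t*(2*t - 1)) : ℝ) : ℂ) * Ric₂ tR k l
          + (((t - 1)^2/(2*t*(2*t - 1)) : ℝ) : ℂ) * Ric₁ tR k l
          + (((t - 1)/(2*(2*t - 1)) : ℝ) : ℂ) * (Ric₃ tR k l + Ric₄ tR k l)
          + (((t - 1)^2*(t^2 - 4*t + 1)/(8*t^3*(2*t - 1)) : ℝ) : ℂ)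
              * ∑ i : Fin n, ∑ r : Fin n, tT i k r * (starRingEnd ℂ) (tT i l r)
          + (((t - 1)^3/(8*t^2*(2*t - 1)) : ℝ) : ℂ)
              * ((∑ i : Fin n, ∑ r : Fin n, tT k r l * (starRingEnd ℂ) (tT i r i))
                + (∑ i : Fin n, ∑ r : Fin n, tT i r i * (starRingEnd ℂ) (tT l r k)))
          + ((((t - 1)^2*(t^2 + 2*t - 1))/(8*t^3*(2*t - 1)) + (1 - 1/τ)/(4*t^2) : ℝ) : ℂ)
              * ∑ i : Fin n, ∑ r : Fin n, tT i r l * (starRingEnd ℂ) (tT i r k) := by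
  intro k l
  have ht0' : (t : ℂ) ≠ 0 := by exact_mod_cast ht0
  have hτ' : (τ : ℂ) ≠ 0 := by exact_mod_cast hτ
  have ht2r : (2*t - 1 : ℝ) ≠ 0 := by intro h; apply ht2; linarith
  have ht2' : (2*(t:ℂ) - 1) ≠ 0 := by
    have : ((2*t - 1 : ℝ) : ℂ) ≠ 0 := Complex.ofReal_ne_zero.mpr ht2r
    push_cast at this; exact this
  have hcongr : ∀ (f g : Fin n → Fin n → ℂ), (∀ i r, f i r = g i r) →
      (∑ i : Fin n, ∑ r : Fin n, f i r) = ∑ i : Fin n, ∑ r : Fin n, g i r :=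
    fun f g h => Finset.sum_congr rfl fun i _ => Finset.sum_congr rfl fun r _ => h i r
  have hmul2 : ∀ (c : ℂ) (f : Fin n → Fin n → ℂ),
      (∑ i : Fin n, ∑ r : Fin n, c * f i r) = c * ∑ i : Fin n, ∑ r : Fin n, f i r := by
    intro c f; simp [Finset.mul_sum]
  -- antisymmetry rearrangements
  have hS1 : (∑ i : Fin n, ∑ r : Fin n, cT k i r * (starRingEnd ℂ) (cT l i r))
      = ∑ i : Fin n, ∑ r : Fin n, cT i k r * (starRingEnd ℂ) (cT i l r) := by
    exact hcongr _ _ (fun i r => by rw [hcT k i r, hcT l i r, map_neg]; ring)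
  have hS2 : (∑ i : Fin n, ∑ r : Fin n, cT k r i * (starRingEnd ℂ) (cT l r i))
      = ∑ i : Fin n, ∑ r : Fin n, cT i k r * (starRingEnd ℂ) (cT i l r) := by
    rw [hcongr _ (fun i r => cT r k i * (starRingEnd ℂ) (cT r l i))
      (fun i r => by rw [hcT k r i, hcT l r i, map_neg]; ring), Finset.sum_comm]
  have hS3 : (∑ i : Fin n, ∑ r : Fin n, cT k i r * (starRingEnd ℂ) (cT i l r))
      = -∑ i : Fin n, ∑ r : Fin n, cT i k r * (starRingEnd ℂ) (cT i l r) := by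
    rw [hcongr _ (fun i r => -(cT i k r * (starRingEnd ℂ) (cT i l r)))
      (fun i r => by rw [hcT k i r]; ring)]
    simp
  have hS4 : (∑ i : Fin n, ∑ r : Fin n, cT i k r * (starRingEnd ℂ) (cT l i r))
      = -∑ i : Fin n, ∑ r : Fin n, cT i k r * (starRingEnd ℂ) (cT i l r) := by
    rw [hcongr _ (fun i r => -(cT i k r * (starRingEnd ℂ) (cT i l r)))
      (fun i r => by rw [hcT l i r, map_neg]; ring)]
    simp
  -- torsion sums of tT
  have hT1 : (∑ i : Fin n, ∑ r : Fin n, tT i k r * (starRingEnd ℂ) (tT i l r))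
      = (t:ℂ)^2 * ∑ i : Fin n, ∑ r : Fin n, cT i k r * (starRingEnd ℂ) (cT i l r) := by
    rw [hcongr _ (fun i r => (t:ℂ)^2 * (cT i k r * (starRingEnd ℂ) (cT i l r)))
      (fun i r => by rw [htT, htT, map_mul, Complex.conj_ofReal]; ring), hmul2]
  have hTN1 : (∑ i : Fin n, ∑ r : Fin n, tT k r l * (starRingEnd ℂ) (tT i r i))
      = (t:ℂ)^2 * ∑ i : Fin n, ∑ r : Fin n, cT k r l * (starRingEnd ℂ) (cT i r i) := by
    rw [hcongr _ (fun i r => (t:ℂ)^2 * (cT k r l * (starRingEnd ℂ) (cT i r i)))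
      (fun i r => by rw [htT, htT, map_mul, Complex.conj_ofReal]; ring), hmul2]
  have hTN2 : (∑ i : Fin n, ∑ r : Fin n, tT i r i * (starRingEnd ℂ) (tT l r k))
      = (t:ℂ)^2 * ∑ i : Fin n, ∑ r : Fin n, cT i r i * (starRingEnd ℂ) (cT l r k) := by
    rw [hcongr _ (fun i r => (t:ℂ)^2 * (cT i r i * (starRingEnd ℂ) (cT l r k)))
      (fun i r => by rw [htT, htT, map_mul, Complex.conj_ofReal]; ring), hmul2]
  have hTQ : (∑ i : Fin n, ∑ r : Fin n, tT i r l * (starRingEnd ℂ) (tT i r k))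
      = (t:ℂ)^2 * ∑ i : Fin n, ∑ r : Fin n, cT i r l * (starRingEnd ℂ) (cT i r k) := by
    rw [hcongr _ (fun i r => (t:ℂ)^2 * (cT i r l * (starRingEnd ℂ) (cT i r k)))
      (fun i r => by rw [htT, htT, map_mul, Complex.conj_ofReal]; ring), hmul2]
  -- Ricci traces of tR
  have hG2 : Ric₂ tR k l = (t:ℂ) * (∑ i : Fin n, cR i i k l)
      + (((1 - t)/2 : ℝ) : ℂ) * ((∑ i : Fin n, cR k i i l) + (∑ i : Fin n, cR i l k i))
      + ((((1 - t)/2)^2 : ℝ) : ℂ)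
          * ((∑ i : Fin n, ∑ r : Fin n, cT i k r * (starRingEnd ℂ) (cT i l r))
            - (∑ i : Fin n, ∑ r : Fin n, cT i r l * (starRingEnd ℂ) (cT i r k))) := by
    rw [hRic₂]
    simp only [htR, Finset.sum_add_distrib, Finset.sum_sub_distrib, ← Finset.mul_sum]
  have hG1 : Ric₁ tR k l = (t:ℂ) * (∑ i : Fin n, cR k l i i)
      + (((1 - t)/2 : ℝ) : ℂ) * ((∑ i : Fin n, cR k i i l) + (∑ i : Fin n, cR i l k i)) := by
    rw [hRic₁]
    simp only [htR, Finset.sum_add_distrib, Finset.sum_sub_distrib, ← Finset.mul_sum]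
    rw [hS1, hS2]
    ring
  have hG3 : Ric₃ tR k l = (t:ℂ) * (∑ i : Fin n, cR k i i l)
      + (((1 - t)/2 : ℝ) : ℂ) * ((∑ i : Fin n, cR i i k l) + (∑ i : Fin n, cR k l i i))
      + ((((1 - t)/2)^2 : ℝ) : ℂ)
          * (-(∑ i : Fin n, ∑ r : Fin n, cT i k r * (starRingEnd ℂ) (cT i l r))
            - (∑ i : Fin n, ∑ r : Fin n, cT k r l * (starRingEnd ℂ) (cT i r i))) := by
    rw [hRic₃]
    simp only [htR, Finset.sum_add_distrib, Finset.sum_sub_distrib, ← Finset.mul_sum]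
    rw [hS3]
  have hG4 : Ric₄ tR k l = (t:ℂ) * (∑ i : Fin n, cR i l k i)
      + (((1 - t)/2 : ℝ) : ℂ) * ((∑ i : Fin n, cR k l i i) + (∑ i : Fin n, cR i i k l))
      + ((((1 - t)/2)^2 : ℝ) : ℂ)
          * (-(∑ i : Fin n, ∑ r : Fin n, cT i k r * (starRingEnd ℂ) (cT i l r))
            - (∑ i : Fin n, ∑ r : Fin n, cT i r i * (starRingEnd ℂ) (cT l r k))) := by
    rw [hRic₄]
    simp only [htR, Finset.sum_add_distrib, Finset.sum_sub_distrib, ← Finset.mul_sum]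
    rw [hS4]
  -- coefficient identities over ℂ
  have hA : (2*(t:ℂ)*(2*(t:ℂ) - 1)) ≠ 0 := mul_ne_zero (mul_ne_zero two_ne_zero ht0') ht2'
  have hB : (8*(t:ℂ)^3*(2*(t:ℂ) - 1)) ≠ 0 :=
    mul_ne_zero (mul_ne_zero (by norm_num) (pow_ne_zero 3 ht0')) ht2'
  have hC : (2*(2*(t:ℂ) - 1)) ≠ 0 := mul_ne_zero two_ne_zero ht2'
  have c1 : ((t:ℂ)^2 + 2*(t:ℂ) - 1)/(2*(t:ℂ)*(2*(t:ℂ) - 1)) * (t:ℂ)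
      + ((t:ℂ) - 1)/(2*(2*(t:ℂ) - 1)) * ((1 - (t:ℂ))/2) * 2 = 1 := by
    field_simp; rw [div_eq_iff (by rw [mul_comm]; exact ht2')]; ring
  have c2 : ((t:ℂ) - 1)^2/(2*(t:ℂ)*(2*(t:ℂ) - 1)) * (t:ℂ)
      + ((t:ℂ) - 1)/(2*(2*(t:ℂ) - 1)) * ((1 - (t:ℂ))/2) * 2 = 0 := by
    field_simp; ring
  have c3 : ((t:ℂ)^2 + 2*(t:ℂ) - 1)/(2*(t:ℂ)*(2*(t:ℂ) - 1)) * ((1 - (t:ℂ))/2)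
      + ((t:ℂ) - 1)^2/(2*(t:ℂ)*(2*(t:ℂ) - 1)) * ((1 - (t:ℂ))/2)
      + ((t:ℂ) - 1)/(2*(2*(t:ℂ) - 1)) * (t:ℂ) = 0 := by
    field_simp; ring
  have c4 : ((t:ℂ)^2 + 2*(t:ℂ) - 1)/(2*(t:ℂ)*(2*(t:ℂ) - 1)) * ((1 - (t:ℂ))/2)^2
      + ((t:ℂ) - 1)^2*((t:ℂ)^2 - 4*(t:ℂ) + 1)/(8*(t:ℂ)^3*(2*(t:ℂ) - 1)) * (t:ℂ)^2
      = 2 * (((t:ℂ) - 1)/(2*(2*(t:ℂ) - 1)) * ((1 - (t:ℂ))/2)^2) := by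
    rw [div_mul_eq_mul_div, div_mul_eq_mul_div, div_mul_eq_mul_div, mul_div_assoc',
      div_add_div _ _ hA hB, div_eq_div_iff (mul_ne_zero hA hB) hC]
    ring
  have c5 : -(((t:ℂ) - 1)/(2*(2*(t:ℂ) - 1)) * ((1 - (t:ℂ))/2)^2)
      + ((t:ℂ) - 1)^3/(8*(t:ℂ)^2*(2*(t:ℂ) - 1)) * (t:ℂ)^2 = 0 := by
    field_simp; ring
  have c6 : -(((t:ℂ)^2 + 2*(t:ℂ) - 1)/(2*(t:ℂ)*(2*(t:ℂ) - 1)) * ((1 - (t:ℂ))/2)^2)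
      + ((t:ℂ) - 1)^2*((t:ℂ)^2 + 2*(t:ℂ) - 1)/(8*(t:ℂ)^3*(2*(t:ℂ) - 1)) * (t:ℂ)^2 = 0 := by
    field_simp; ring
  have c7 : (1 - 1/(τ:ℂ))/(4*(t:ℂ)^2) * (t:ℂ)^2 = (1 - 1/(τ:ℂ))/4 := by
    field_simp
  rw [hG1, hG2, hG3, hG4, hT1, hTN1, hTN2, hTQ, hRic₂]
  push_cast
  linear_combination
    (-(∑ i : Fin n, cR i i k l)) * c1
    - (∑ i : Fin n, cR k l i i) * c2
    - ((∑ i : Fin n, cR k i i l) + (∑ i : Fin n, cR i l k i)) * c3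
    - (∑ i : Fin n, ∑ r : Fin n, cT i k r * (starRingEnd ℂ) (cT i l r)) * c4
    - ((∑ i : Fin n, ∑ r : Fin n, cT k r l * (starRingEnd ℂ) (cT i r i))
        + (∑ i : Fin n, ∑ r : Fin n, cT i r i * (starRingEnd ℂ) (cT l r k))) * c5
    - (∑ i : Fin n, ∑ r : Fin n, cT i r l * (starRingEnd ℂ) (cT i r k)) * c6
    - (∑ i : Fin n, ∑ r : Fin n, cT i r l * (starRingEnd ℂ) (cT i r k)) * c7
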